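/- arXiv:1808.06564 — 2 statements merged into one kernel-verified Lean document; each statement's English description precedes it below -/
import Mathlib

section
/- Let X₁, X₂ and K be real Banach spaces, let π : K → K be a bounded linear idempotent (π ∘ π = π), and let A : X₁ → K and B : X₂ → K be bounded linear maps. Assume: (i) the map (1 − π) ∘ A, viewed as a map into the closed subspace ker π = range(1 − π), has finite-dimensional kernel, closed range, and finite-dimensional cokernel (ker π) / range((1 − π) ∘ A); (ii) the map π ∘ B, viewed as a map into the closed subspace range π = ker(1 − π), has finite-dimensional kernel, closed range, and finite-dimensional cokernel (range π) / range(π ∘ B); (iii) π ∘ A : X₁ → K and (1 − π) ∘ B : X₂ → K are compact operators. Then the bounded linear map X₁ × X₂ → K, (x, y) ↦ A x + B y, has the Fredholm properties: its kernel is finite-dimensional, its range is closed, and K / range is finite-dimensional. -/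
open Filter Metric Topology Set



namespace FredholmSpliceAux

lemma le_infDist' {α : Type*} [MetricSpace α] {s : Set α} {x : α} {b : ℝ}
    (hs : s.Nonempty) (h : ∀ y ∈ s, b ≤ dist x y) : b ≤ Metric.infDist x s := by
  by_contra hlt
  obtain ⟨y, hy, hxy⟩ := (Metric.infDist_lt_iff hs).1 (not_le.1 hlt)
  exact absurd hxy (not_lt.2 (h y hy))

variable {X : Type*} [NormedAddCommGroup X] [NormedSpace ℝ X]

lemma infDist_sub_mem (S : Submodule ℝ X) {k : X} (hk : k ∈ S) (x : X) :
    Metric.infDist (x - k) (S : Set X) = Metric.infDist x (S : Set X) := by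
  have hne : (S : Set X).Nonempty := ⟨0, S.zero_mem⟩
  refine le_antisymm (le_infDist' hne fun y hy => ?_) (le_infDist' hne fun y hy => ?_)
  · have h1 : Metric.infDist (x - k) (S : Set X) ≤ dist (x - k) (y - k) :=
      Metric.infDist_le_dist_of_mem (S.sub_mem hy hk)
    have h2 : dist (x - k) (y - k) = dist x y := by
      rw [dist_eq_norm, dist_eq_norm]; congr 1; abel
    linarith
  · have h1 : Metric.infDist x (S : Set X) ≤ dist x (y + k) :=
      Metric.infDist_le_dist_of_mem (S.add_mem hy hk)
    have h2 : dist x (y + k) = dist (x - k) y := by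
      rw [dist_eq_norm, dist_eq_norm]; congr 1; abel
    linarith

lemma abs_mul_infDist_le_infDist_smul (S : Submodule ℝ X) {c : ℝ} (hc : c ≠ 0) (x : X) :
    |c| * Metric.infDist x (S : Set X) ≤ Metric.infDist (c • x) (S : Set X) := by
  refine le_infDist' ⟨0, S.zero_mem⟩ fun y hy => ?_
  have h1 : Metric.infDist x (S : Set X) ≤ dist x (c⁻¹ • y) :=
    Metric.infDist_le_dist_of_mem (S.smul_mem c⁻¹ hy)
  have h2 : dist (c • x) y = |c| * dist x (c⁻¹ • y) := by
    rw [dist_eq_norm, dist_eq_norm, ← Real.norm_eq_abs, ← norm_smul]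
    congr 1
    rw [smul_sub, smul_inv_smul₀ hc]
  rw [h2]
  exact mul_le_mul_of_nonneg_left h1 (abs_nonneg c)

end FredholmSpliceAux

namespace FredholmSpliceAux2


variable {X K : Type*} [NormedAddCommGroup X] [NormedSpace ℝ X] [CompleteSpace X]
  [NormedAddCommGroup K] [NormedSpace ℝ K] [CompleteSpace K]

/-- Properness on bounded sequences. -/
def IsProper (T : X →L[ℝ] K) : Prop :=
  ∀ (u : ℕ → X) (M : ℝ), (∀ n, ‖u n‖ ≤ M) → ∀ y : K,
    Tendsto (fun n => T (u n)) atTop (𝓝 y) →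
    ∃ (x : X) (φ : ℕ → ℕ), StrictMono φ ∧ Tendsto (u ∘ φ) atTop (𝓝 x)

lemma proper_of_semiFredholm (S : X →L[ℝ] K)
    (hker : FiniteDimensional ℝ (LinearMap.ker (S : X →ₗ[ℝ] K)))
    (hclosed : IsClosed ((LinearMap.range (S : X →ₗ[ℝ] K) : Submodule ℝ K) : Set K)) :
    IsProper S := by
  intro u M hu y hconv
  haveI : CompleteSpace (LinearMap.range (S : X →ₗ[ℝ] K)) := hclosed.completeSpace_coe
  haveI := hker
  have hM0 : 0 ≤ M := le_trans (norm_nonneg _) (hu 0)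
  -- corestriction of S to its range, and the open mapping bound
  set Sc : X →L[ℝ] LinearMap.range (S : X →ₗ[ℝ] K) :=
    S.codRestrict (LinearMap.range (S : X →ₗ[ℝ] K)) (fun x => LinearMap.mem_range_self _ x) with hSc
  have hsurj : Function.Surjective Sc := by
    rintro ⟨z, hz⟩
    obtain ⟨x, hx⟩ := LinearMap.mem_range.1 hz
    exact ⟨x, Subtype.ext hx⟩
  obtain ⟨C, Cpos, hC⟩ := Sc.exists_preimage_norm_le hsurj
  -- the limit is in the range
  have hy : y ∈ LinearMap.range (S : X →ₗ[ℝ] K) :=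
    hclosed.mem_of_tendsto hconv (Eventually.of_forall fun n => ⟨u n, rfl⟩)
  obtain ⟨x₀, hx₀⟩ := hy
  -- correctors
  have hz : ∀ n, ∃ z : X, S z = S (u n) - y ∧ ‖z‖ ≤ C * ‖S (u n) - y‖ := by
    intro n
    obtain ⟨x, hx1, hx2⟩ := hC ⟨S (u n) - y, (LinearMap.range (S : X →ₗ[ℝ] K)).sub_mem
      (LinearMap.mem_range_self _ _) ⟨x₀, hx₀⟩⟩
    refine ⟨x, ?_, ?_⟩
    · exact congrArg Subtype.val hx1
    · simpa using hx2
  choose z hz1 hz2 using hz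
  have hz0 : Tendsto z atTop (𝓝 0) := by
    rw [tendsto_zero_iff_norm_tendsto_zero]
    have h1 : Tendsto (fun n => C * ‖S (u n) - y‖) atTop (𝓝 0) := by
      have h0 : Tendsto (fun n => S (u n) - y) atTop (𝓝 (y - y)) :=
        hconv.sub tendsto_const_nhds
      rw [sub_self] at h0
      have h0n := h0.norm
      rw [norm_zero] at h0n
      simpa using h0n.const_mul C
    exact squeeze_zero (fun n => norm_nonneg _) hz2 h1
  -- kernel parts
  have hk : ∀ n, u n - x₀ - z n ∈ LinearMap.ker (S : X →ₗ[ℝ] K) := by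
    intro n
    simp only [LinearMap.mem_ker, ContinuousLinearMap.coe_coe, map_sub, hz1, show S x₀ = y from hx₀]
    abel
  set k : ℕ → LinearMap.ker (S : X →ₗ[ℝ] K) := fun n => ⟨u n - x₀ - z n, hk n⟩ with hkdef
  have hbound : ∀ n, ‖z n‖ ≤ C * (‖S‖ * M + ‖y‖) := by
    intro n
    refine le_trans (hz2 n) (mul_le_mul_of_nonneg_left ?_ (le_of_lt Cpos))
    refine le_trans (norm_sub_le _ _) (add_le_add ?_ le_rfl)
    exact le_trans (S.le_opNorm _) (mul_le_mul_of_nonneg_left (hu n) (norm_nonneg S))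
  set M' : ℝ := M + ‖x₀‖ + C * (‖S‖ * M + ‖y‖) with hM'
  have hkb : ∀ n, k n ∈ Metric.closedBall (0 : LinearMap.ker (S : X →ₗ[ℝ] K)) M' := by
    intro n
    rw [Metric.mem_closedBall, dist_zero_right]
    have : ‖(k n : X)‖ ≤ M' := by
      simp only [hkdef]
      calc ‖u n - x₀ - z n‖ ≤ ‖u n‖ + ‖x₀‖ + ‖z n‖ := by
            refine le_trans (norm_sub_le _ _) ?_
            exact add_le_add (norm_sub_le _ _) le_rfl
        _ ≤ M' := by
            rw [hM']
            exact add_le_add (add_le_add (hu n) le_rfl) (hbound n)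
    exact this
  obtain ⟨a, -, φ, hφ, ha⟩ :=
    tendsto_subseq_of_bounded (Metric.isBounded_closedBall
      (x := (0 : LinearMap.ker (S : X →ₗ[ℝ] K))) (r := M')) hkb
  refine ⟨(a : X) + x₀, φ, hφ, ?_⟩
  have hcoe : Tendsto (fun n => ((k (φ n) : X))) atTop (𝓝 (a : X)) :=
    (continuous_subtype_val.tendsto a).comp ha
  have hzφ : Tendsto (fun n => z (φ n)) atTop (𝓝 0) := hz0.comp hφ.tendsto_atTop
  have : Tendsto (fun n => ((k (φ n) : X) + x₀ + z (φ n))) atTop (𝓝 ((a : X) + x₀ + 0)) :=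
    (hcoe.add tendsto_const_nhds).add hzφ
  rw [add_zero] at this
  refine this.congr fun n => ?_
  simp only [hkdef, Function.comp]
  abel


lemma isProper_of_eq_add_compact {T S Cf : X →L[ℝ] K}
    (hT : ∀ z, T z = S z + Cf z)
    (hker : FiniteDimensional ℝ (LinearMap.ker (S : X →ₗ[ℝ] K)))
    (hclosed : IsClosed ((LinearMap.range (S : X →ₗ[ℝ] K) : Submodule ℝ K) : Set K))
    (hCf : IsCompactOperator ⇑Cf) :
    IsProper T := by
  intro u M hu y hconv
  have hM0 : 0 ≤ M := le_trans (norm_nonneg _) (hu 0)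
  obtain ⟨K₀, hK₀c, hK₀⟩ := IsCompactOperator.image_subset_compact_of_bounded
    (f := (Cf : X →ₗ[ℝ] K)) hCf (Metric.isBounded_closedBall (x := (0:X)) (r := M))
  have hmem : ∀ n, Cf (u n) ∈ K₀ := fun n =>
    hK₀ ⟨u n, by simpa [Metric.mem_closedBall, dist_zero_right] using hu n, rfl⟩
  obtain ⟨w, -, φ₁, hφ₁, hCconv⟩ := hK₀c.tendsto_subseq hmem
  have hSconv : Tendsto (fun n => S (u (φ₁ n))) atTop (𝓝 (y - w)) := by
    have h1 : Tendsto (fun n => T (u (φ₁ n))) atTop (𝓝 y) := hconv.comp hφ₁.tendsto_atTop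
    have h2 : (fun n => S (u (φ₁ n))) = fun n => T (u (φ₁ n)) - Cf (u (φ₁ n)) := by
      funext n; rw [hT]; abel
    rw [h2]
    exact h1.sub hCconv
  obtain ⟨x, φ₂, hφ₂, hconv₂⟩ := proper_of_semiFredholm S hker hclosed (u ∘ φ₁) M
    (fun n => hu (φ₁ n)) (y - w) hSconv
  exact ⟨x, φ₁ ∘ φ₂, hφ₁.comp hφ₂, hconv₂⟩

lemma finiteDimensional_ker_of_isProper (T : X →L[ℝ] K) (hp : IsProper T) :
    FiniteDimensional ℝ (LinearMap.ker (T : X →ₗ[ℝ] K)) := by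
  have hcomp : IsCompact (Metric.closedBall (0 : LinearMap.ker (T : X →ₗ[ℝ] K)) 1) := by
    rw [isCompact_iff_isSeqCompact]
    intro v hv
    have hvb : ∀ n, ‖((v n : X))‖ ≤ 1 := by
      intro n
      have := hv n
      rw [Metric.mem_closedBall, dist_zero_right] at this
      exact this
    have hTv : Tendsto (fun n => T ((v n : X))) atTop (𝓝 0) := by
      have : (fun n => T ((v n : X))) = fun _ => (0 : K) :=
        funext fun n => (v n).2
      rw [this]; exact tendsto_const_nhds
    obtain ⟨x, φ, hφ, hx⟩ := hp (fun n => ((v n : X))) 1 hvb 0 hTv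
    have hxker : x ∈ LinearMap.ker (T : X →ₗ[ℝ] K) := by
      have h1 : Tendsto (fun n => T ((v (φ n) : X))) atTop (𝓝 (T x)) :=
        (T.continuous.tendsto x).comp hx
      have h2 : Tendsto (fun n => T ((v (φ n) : X))) atTop (𝓝 0) :=
        hTv.comp hφ.tendsto_atTop
      exact LinearMap.mem_ker.2 (tendsto_nhds_unique h1 h2)
    have hxnorm : ‖x‖ ≤ 1 := by
      have h1 : Tendsto (fun n => ‖((v (φ n) : X))‖) atTop (𝓝 ‖x‖) := hx.norm
      exact le_of_tendsto h1 (Eventually.of_forall fun n => hvb (φ n))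
    refine ⟨⟨x, hxker⟩, ?_, φ, hφ, ?_⟩
    · rw [Metric.mem_closedBall, dist_zero_right]
      exact hxnorm
    · rw [tendsto_subtype_rng]
      exact hx
  exact FiniteDimensional.of_isCompact_closedBall₀ (𝕜 := ℝ) one_pos hcomp

lemma isClosed_range_of_isProper (T : X →L[ℝ] K) (hp : IsProper T) :
    IsClosed ((LinearMap.range (T : X →ₗ[ℝ] K) : Submodule ℝ K) : Set K) := by
  rw [← isSeqClosed_iff_isClosed]
  intro g y hg hgy
  choose x hx using fun n => LinearMap.mem_range.1 (hg n)
  have hkerne : ((LinearMap.ker (T : X →ₗ[ℝ] K) : Submodule ℝ X) : Set X).Nonempty :=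
    ⟨0, Submodule.zero_mem _⟩
  -- choose representatives close to minimal distance from the kernel
  have hsel : ∀ n, ∃ k ∈ (LinearMap.ker (T : X →ₗ[ℝ] K) : Submodule ℝ X),
      dist (x n) k < Metric.infDist (x n) (LinearMap.ker (T : X →ₗ[ℝ] K) : Set X) + 1 := by
    intro n
    exact (Metric.infDist_lt_iff hkerne).1 (lt_add_one _)
  choose k hkmem hkdist using hsel
  set x' : ℕ → X := fun n => x n - k n with hx'def
  have hTx' : ∀ n, T (x' n) = g n := by
    intro n
    simp only [hx'def, map_sub, show T (k n) = 0 from LinearMap.mem_ker.1 (hkmem n), sub_zero,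
      show T (x n) = g n from hx n]
  have hinf : ∀ n, Metric.infDist (x' n) (LinearMap.ker (T : X →ₗ[ℝ] K) : Set X)
      = Metric.infDist (x n) (LinearMap.ker (T : X →ₗ[ℝ] K) : Set X) := fun n =>
    FredholmSpliceAux.infDist_sub_mem _ (hkmem n) (x n)
  have hx'n : ∀ n, ‖x' n‖ < Metric.infDist (x' n) (LinearMap.ker (T : X →ₗ[ℝ] K) : Set X) + 1 := by
    intro n
    rw [hinf n]
    have := hkdist n
    rwa [dist_eq_norm] at this
  by_cases hcase : ∃ M, ∃ᶠ n in atTop, ‖x' n‖ ≤ M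
  · obtain ⟨M, hM⟩ := hcase
    obtain ⟨φ, hφ, hφM⟩ := Filter.extraction_of_frequently_atTop hM
    have hTconv : Tendsto (fun n => T (x' (φ n))) atTop (𝓝 y) := by
      have : (fun n => T (x' (φ n))) = fun n => g (φ n) := funext fun n => hTx' (φ n)
      rw [this]
      exact hgy.comp hφ.tendsto_atTop
    obtain ⟨x₀, ψ, hψ, hx₀⟩ := hp (fun n => x' (φ n)) M hφM y hTconv
    have : T x₀ = y := by
      have h1 : Tendsto (fun n => T (x' (φ (ψ n)))) atTop (𝓝 (T x₀)) :=
        (T.continuous.tendsto x₀).comp hx₀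
      have h2 : Tendsto (fun n => T (x' (φ (ψ n)))) atTop (𝓝 y) :=
        hTconv.comp hψ.tendsto_atTop
      exact tendsto_nhds_unique h1 h2
    exact ⟨x₀, this⟩
  · exfalso
    have htop : Tendsto (fun n => ‖x' n‖) atTop atTop := by
      refine tendsto_atTop.2 fun M => ?_
      have h : ¬ ∃ᶠ n in atTop, ‖x' n‖ ≤ M := fun hf => hcase ⟨M, hf⟩
      rw [Filter.not_frequently] at h
      exact h.mono fun n hn => le_of_lt (not_le.1 hn)
    set u : ℕ → X := fun n => (‖x' n‖)⁻¹ • x' n with hudef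
    have hu1 : ∀ n, ‖u n‖ ≤ 1 := by
      intro n
      rcases eq_or_ne (‖x' n‖) 0 with h | h
      · simp [hudef, h]
      · rw [hudef]
        simp only [norm_smul, norm_inv, norm_norm]
        rw [inv_mul_cancel₀ h]
    have hTu : Tendsto (fun n => T (u n)) atTop (𝓝 0) := by
      have h1 : Tendsto (fun n => (‖x' n‖)⁻¹) atTop (𝓝 0) := htop.inv_tendsto_atTop
      have h2 : (fun n => T (u n)) = fun n => (‖x' n‖)⁻¹ • g n := by
        funext n
        rw [hudef]
        simp only [map_smul, hTx' n]
      rw [h2]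
      have := h1.smul hgy
      rwa [zero_smul] at this
    obtain ⟨w, φ, hφ, hw⟩ := hp u 1 hu1 0 hTu
    have hwker : w ∈ LinearMap.ker (T : X →ₗ[ℝ] K) := by
      have h1 : Tendsto (fun n => T (u (φ n))) atTop (𝓝 (T w)) :=
        (T.continuous.tendsto w).comp hw
      have h2 : Tendsto (fun n => T (u (φ n))) atTop (𝓝 0) := hTu.comp hφ.tendsto_atTop
      exact LinearMap.mem_ker.2 (tendsto_nhds_unique h1 h2)
    -- infDist of u (φ n) from the kernel tends to 0
    have h1 : Tendsto (fun n => Metric.infDist (u (φ n)) (LinearMap.ker (T : X →ₗ[ℝ] K) : Set X))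
        atTop (𝓝 0) := by
      refine squeeze_zero (fun n => Metric.infDist_nonneg) (fun n =>
        Metric.infDist_le_dist_of_mem hwker) ?_
      have := hw.dist (tendsto_const_nhds (x := w))
      simpa using this
    -- but eventually it is at least 1/2
    have h2 : ∀ᶠ n in atTop, (1 : ℝ)/2 ≤ Metric.infDist (u n) (LinearMap.ker (T : X →ₗ[ℝ] K) : Set X) := by
      filter_upwards [htop.eventually_ge_atTop 2] with n hn
      have hpos : (0:ℝ) < ‖x' n‖ := lt_of_lt_of_le (by norm_num) hn
      have hne : (‖x' n‖)⁻¹ ≠ 0 := inv_ne_zero (ne_of_gt hpos)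
      have hsmul := FredholmSpliceAux.abs_mul_infDist_le_infDist_smul
        (LinearMap.ker (T : X →ₗ[ℝ] K)) hne (x' n)
      rw [hudef]
      have habs : |(‖x' n‖)⁻¹| = (‖x' n‖)⁻¹ := abs_of_pos (inv_pos.2 hpos)
      rw [habs] at hsmul
      have hd : ‖x' n‖ - 1 < Metric.infDist (x' n) (LinearMap.ker (T : X →ₗ[ℝ] K) : Set X) := by
        have := hx'n n; linarith
      have hkey : (‖x' n‖)⁻¹ * (‖x' n‖ - 1)
          ≤ (‖x' n‖)⁻¹ * Metric.infDist (x' n) (LinearMap.ker (T : X →ₗ[ℝ] K) : Set X) :=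
        mul_le_mul_of_nonneg_left (le_of_lt hd) (le_of_lt (inv_pos.2 hpos))
      have harith : (1:ℝ)/2 ≤ (‖x' n‖)⁻¹ * (‖x' n‖ - 1) := by
        rw [mul_sub, inv_mul_cancel₀ (ne_of_gt hpos), mul_one]
        have : (‖x' n‖)⁻¹ ≤ 1/2 := by
          rw [inv_le_iff_one_le_mul₀ hpos] at *
          · linarith
        linarith
      exact le_trans harith (le_trans hkey hsmul)
    have h3 : ∀ᶠ n in atTop, (1:ℝ)/2 ≤ Metric.infDist (u (φ n)) (LinearMap.ker (T : X →ₗ[ℝ] K) : Set X) :=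
      hφ.tendsto_atTop.eventually h2
    have h4 : ∀ᶠ n in atTop,
        Metric.infDist (u (φ n)) (LinearMap.ker (T : X →ₗ[ℝ] K) : Set X) < 1/2 :=
      h1.eventually_lt_const (by norm_num)
    obtain ⟨n, hn3, hn4⟩ := (h3.and h4).exists
    linarith

end FredholmSpliceAux2

namespace FredholmSpliceAux3

lemma exists_fd_sup_eq_top {M : Type*} [AddCommGroup M] [Module ℝ M]
    (N : Submodule ℝ M) (h : FiniteDimensional ℝ (M ⧸ N)) :
    ∃ W : Submodule ℝ M, FiniteDimensional ℝ W ∧ N ⊔ W = ⊤ := by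
  haveI := h
  obtain ⟨n, s, hs⟩ := Module.Finite.exists_fin (R := ℝ) (M := M ⧸ N)
  choose g hg using fun i => Submodule.Quotient.mk_surjective N (s i)
  refine ⟨Submodule.span ℝ (Set.range g), FiniteDimensional.span_of_finite ℝ
    (Set.finite_range g), ?_⟩
  rw [eq_top_iff]
  intro x _
  have hmap : Submodule.map N.mkQ (Submodule.span ℝ (Set.range g)) = ⊤ := by
    rw [Submodule.map_span, ← Set.range_comp]
    have : N.mkQ ∘ g = s := funext fun i => by
      simp [Submodule.mkQ_apply, hg i]
    rw [this, hs]
  have hx : N.mkQ x ∈ Submodule.map N.mkQ (Submodule.span ℝ (Set.range g)) := by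
    rw [hmap]; trivial
  obtain ⟨w, hw, hwx⟩ := hx
  have hxw : x - w ∈ N := by
    have : N.mkQ (x - w) = 0 := by rw [map_sub, hwx, sub_self]
    rwa [← LinearMap.mem_ker, Submodule.ker_mkQ] at this
  exact Submodule.mem_sup.2 ⟨x - w, hxw, w, hw, by abel⟩

lemma exists_fd_sup_eq {K : Type*} [AddCommGroup K] [Module ℝ K]
    (P R : Submodule ℝ K) (hle : R ≤ P)
    (h : FiniteDimensional ℝ (↥P ⧸ R.comap P.subtype)) :
    ∃ W : Submodule ℝ K, FiniteDimensional ℝ W ∧ R ⊔ W = P := by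
  obtain ⟨W', hW', hsup⟩ := exists_fd_sup_eq_top (R.comap P.subtype) h
  haveI := hW'
  refine ⟨W'.map P.subtype, Module.Finite.map W' P.subtype, ?_⟩
  have := congrArg (Submodule.map P.subtype) hsup
  rw [Submodule.map_sup, Submodule.map_comap_subtype, Submodule.map_subtype_top,
    inf_eq_right.mpr hle] at this
  exact this

variable {K : Type*} [NormedAddCommGroup K] [NormedSpace ℝ K]

lemma isClosed_sup_of_idempotent (π : K →L[ℝ] K) (hπ : ∀ z, π (π z) = π z)
    (R₁ R₂ : Submodule ℝ K) (h1 : IsClosed (R₁ : Set K)) (h2 : IsClosed (R₂ : Set K))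
    (hle1 : R₁ ≤ LinearMap.ker (π : K →ₗ[ℝ] K)) (hle2 : R₂ ≤ LinearMap.range (π : K →ₗ[ℝ] K)) :
    IsClosed ((R₁ ⊔ R₂ : Submodule ℝ K) : Set K) := by
  have hset : ((R₁ ⊔ R₂ : Submodule ℝ K) : Set K)
      = {z | z - π z ∈ R₁} ∩ {z | π z ∈ R₂} := by
    ext z
    constructor
    · intro hz
      obtain ⟨u, hu, v, hv, huv⟩ := Submodule.mem_sup.1 hz
      have hπu : π u = 0 := LinearMap.mem_ker.1 (hle1 hu)
      have hπv : π v = v := by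
        obtain ⟨w, hw⟩ := hle2 hv
        rw [← hw]; exact hπ w
      have hπz : π z = v := by rw [← huv, map_add, hπu, hπv, zero_add]
      constructor
      · show z - π z ∈ R₁
        rw [hπz, ← huv]
        simpa using hu
      · show π z ∈ R₂
        rw [hπz]; exact hv
    · rintro ⟨hz1, hz2⟩
      exact Submodule.mem_sup.2 ⟨z - π z, hz1, π z, hz2, by abel⟩
  rw [hset]
  exact (h1.preimage (continuous_id.sub π.continuous)).inter (h2.preimage π.continuous)

end FredholmSpliceAux3


set_option maxHeartbeats 1600000 in
open FredholmSpliceAux FredholmSpliceAux2 FredholmSpliceAux3 in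
/-- Splicing Fredholm pieces along a bounded idempotent `π`:
if `(1 − π) ∘ A` is Fredholm into `ker π`, `π ∘ B` is Fredholm into `range π`,
and `π ∘ A`, `(1 − π) ∘ B` are compact, then `(x, y) ↦ A x + B y` has the
Fredholm properties. -/
theorem fredholm_of_spliced_pieces
    {X₁ X₂ K : Type*}
    [NormedAddCommGroup X₁] [NormedSpace ℝ X₁] [CompleteSpace X₁]
    [NormedAddCommGroup X₂] [NormedSpace ℝ X₂] [CompleteSpace X₂]
    [NormedAddCommGroup K] [NormedSpace ℝ K] [CompleteSpace K]
    (π : K →L[ℝ] K) (hπ : π.comp π = π)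
    (A : X₁ →L[ℝ] K) (B : X₂ →L[ℝ] K)
    -- (i) `(1 − π) ∘ A`, viewed as a map into `ker π = range (1 − π)`, is Fredholm
    (hA_ker : FiniteDimensional ℝ (LinearMap.ker ((1 - π).comp A : X₁ →ₗ[ℝ] K)))
    (hA_closed : IsClosed ((LinearMap.range ((1 - π).comp A : X₁ →ₗ[ℝ] K)) : Set K))
    (hA_le : LinearMap.range ((1 - π).comp A : X₁ →ₗ[ℝ] K) ≤ LinearMap.ker (π : K →ₗ[ℝ] K))
    (hA_coker : FiniteDimensional ℝ
      (↥(LinearMap.ker (π : K →ₗ[ℝ] K)) ⧸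
        (LinearMap.range ((1 - π).comp A : X₁ →ₗ[ℝ] K)).comap (LinearMap.ker (π : K →ₗ[ℝ] K)).subtype))
    -- (ii) `π ∘ B`, viewed as a map into `range π = ker (1 − π)`, is Fredholm
    (hB_ker : FiniteDimensional ℝ (LinearMap.ker (π.comp B : X₂ →ₗ[ℝ] K)))
    (hB_closed : IsClosed ((LinearMap.range (π.comp B : X₂ →ₗ[ℝ] K)) : Set K))
    (hB_le : LinearMap.range (π.comp B : X₂ →ₗ[ℝ] K) ≤ LinearMap.range (π : K →ₗ[ℝ] K))
    (hB_coker : FiniteDimensional ℝ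
      (↥(LinearMap.range (π : K →ₗ[ℝ] K)) ⧸
        (LinearMap.range (π.comp B : X₂ →ₗ[ℝ] K)).comap (LinearMap.range (π : K →ₗ[ℝ] K)).subtype))
    -- (iii) compactness of the cross terms
    (hπA : IsCompactOperator ⇑(π.comp A))
    (hB1π : IsCompactOperator ⇑((1 - π).comp B)) :
    FiniteDimensional ℝ (LinearMap.ker (A.coprod B : X₁ × X₂ →ₗ[ℝ] K)) ∧
    IsClosed ((LinearMap.range (A.coprod B : X₁ × X₂ →ₗ[ℝ] K)) : Set K) ∧
    FiniteDimensional ℝ (K ⧸ LinearMap.range (A.coprod B : X₁ × X₂ →ₗ[ℝ] K)) := by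
  have hπ' : ∀ z, π (π z) = π z := fun z => by
    rw [← ContinuousLinearMap.comp_apply, hπ]
  set A₁ : X₁ →L[ℝ] K := (1 - π).comp A with hA₁
  set B₂ : X₂ →L[ℝ] K := π.comp B with hB₂
  set T : X₁ × X₂ →L[ℝ] K := A.coprod B with hT
  set S : X₁ × X₂ →L[ℝ] K := A₁.coprod B₂ with hS
  set Cop : X₁ × X₂ →L[ℝ] K :=
    (π.comp A).comp (ContinuousLinearMap.fst ℝ X₁ X₂)
      + ((1 - π).comp B).comp (ContinuousLinearMap.snd ℝ X₁ X₂) with hCop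
  have hTSC : ∀ z, T z = S z + Cop z := by
    rintro ⟨x, y⟩
    simp only [hT, hS, hCop, hA₁, hB₂, ContinuousLinearMap.coprod_apply,
      ContinuousLinearMap.add_apply, ContinuousLinearMap.comp_apply,
      ContinuousLinearMap.sub_apply, ContinuousLinearMap.one_apply,
      ContinuousLinearMap.coe_fst', ContinuousLinearMap.coe_snd']
    abel
  have hCopc : IsCompactOperator ⇑Cop := by
    have h1 : IsCompactOperator (⇑(π.comp A) ∘ ⇑(ContinuousLinearMap.fst ℝ X₁ X₂)) :=
      hπA.comp_clm _
    have h2 : IsCompactOperator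
        (⇑((1 - π).comp B) ∘ ⇑(ContinuousLinearMap.snd ℝ X₁ X₂)) :=
      hB1π.comp_clm _
    exact h1.add h2
  -- the kernel of `S` is finite-dimensional
  have hkerS : FiniteDimensional ℝ (LinearMap.ker (S : X₁ × X₂ →ₗ[ℝ] K)) := by
    have heq : LinearMap.ker (S : X₁ × X₂ →ₗ[ℝ] K)
        = Submodule.prod (LinearMap.ker (A₁ : X₁ →ₗ[ℝ] K)) (LinearMap.ker (B₂ : X₂ →ₗ[ℝ] K)) := by
      ext ⟨x, y⟩
      simp only [LinearMap.mem_ker, ContinuousLinearMap.coe_coe, Submodule.mem_prod, hS,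
        ContinuousLinearMap.coprod_apply]
      constructor
      · intro h
        have hπA₁ : π (A₁ x) = 0 := by
          rw [hA₁]
          simp only [ContinuousLinearMap.comp_apply, ContinuousLinearMap.sub_apply,
            ContinuousLinearMap.one_apply, map_sub, hπ' (A x), sub_self]
        have hπB₂ : π (B₂ y) = B₂ y := by
          rw [hB₂]
          exact hπ' (B y)
        have hπh : π (A₁ x + B₂ y) = 0 := by rw [h, map_zero]
        rw [map_add, hπA₁, zero_add, hπB₂] at hπh
        refine ⟨?_, hπh⟩
        rw [hπh, add_zero] at h
        exact h
      · rintro ⟨h1, h2⟩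
        rw [h1, h2, add_zero]
    rw [heq]
    haveI := hA_ker
    haveI := hB_ker
    let f : (Submodule.prod (LinearMap.ker (A₁ : X₁ →ₗ[ℝ] K)) (LinearMap.ker (B₂ : X₂ →ₗ[ℝ] K))) →ₗ[ℝ]
        (LinearMap.ker (A₁ : X₁ →ₗ[ℝ] K) × LinearMap.ker (B₂ : X₂ →ₗ[ℝ] K)) :=
      { toFun := fun z => (⟨z.val.1, z.2.1⟩, ⟨z.val.2, z.2.2⟩)
        map_add' := fun a b => rfl
        map_smul' := fun c a => rfl }
    have hfinj : Function.Injective f := by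
      intro a b h
      apply Subtype.ext
      have h1 : a.val.1 = b.val.1 := congrArg (fun t => (t.1 : X₁)) h
      have h2 : a.val.2 = b.val.2 := congrArg (fun t => (t.2 : X₂)) h
      exact Prod.ext h1 h2
    exact FiniteDimensional.of_injective f hfinj
  -- the range of `S` is closed
  have hrangeS : LinearMap.range (S : X₁ × X₂ →ₗ[ℝ] K) = LinearMap.range (A₁ : X₁ →ₗ[ℝ] K) ⊔ LinearMap.range (B₂ : X₂ →ₗ[ℝ] K) := by
    apply le_antisymm
    · rintro z ⟨⟨x, y⟩, rfl⟩
      refine Submodule.mem_sup.2 ⟨A₁ x, ⟨x, rfl⟩, B₂ y, ⟨y, rfl⟩, ?_⟩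
      simp [hS]
    · rw [sup_le_iff]
      constructor
      · rintro z ⟨x, rfl⟩; exact ⟨(x, 0), by simp [hS]⟩
      · rintro z ⟨y, rfl⟩; exact ⟨(0, y), by simp [hS]⟩
  have hclosedS : IsClosed ((LinearMap.range (S : X₁ × X₂ →ₗ[ℝ] K) : Submodule ℝ K) : Set K) := by
    rw [hrangeS]
    exact isClosed_sup_of_idempotent π hπ' _ _ hA_closed hB_closed hA_le hB_le
  -- semi-Fredholm properties of `T`
  have hproper : IsProper T := isProper_of_eq_add_compact hTSC hkerS hclosedS hCopc
  have hkerT : FiniteDimensional ℝ (LinearMap.ker (T : X₁ × X₂ →ₗ[ℝ] K)) :=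
    finiteDimensional_ker_of_isProper T hproper
  have hclosedT : IsClosed ((LinearMap.range (T : X₁ × X₂ →ₗ[ℝ] K) : Submodule ℝ K) : Set K) :=
    isClosed_range_of_isProper T hproper
  refine ⟨hkerT, hclosedT, ?_⟩
  -- the cokernel: the range of `S` has finite codimension
  obtain ⟨W₁, hW₁fd, hW₁⟩ :=
    exists_fd_sup_eq (LinearMap.ker (π : K →ₗ[ℝ] K)) (LinearMap.range (A₁ : X₁ →ₗ[ℝ] K)) hA_le hA_coker
  obtain ⟨W₂, hW₂fd, hW₂⟩ :=
    exists_fd_sup_eq (LinearMap.range (π : K →ₗ[ℝ] K)) (LinearMap.range (B₂ : X₂ →ₗ[ℝ] K)) hB_le hB_coker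
  set W : Submodule ℝ K := W₁ ⊔ W₂ with hW
  haveI := hW₁fd
  haveI := hW₂fd
  haveI hWfd : FiniteDimensional ℝ W := Submodule.finiteDimensional_sup W₁ W₂
  have hsupW : LinearMap.range (S : X₁ × X₂ →ₗ[ℝ] K) ⊔ W = ⊤ := by
    rw [hrangeS, hW, sup_sup_sup_comm, hW₁, hW₂, eq_top_iff]
    intro z _
    have hz1 : z - π z ∈ LinearMap.ker (π : K →ₗ[ℝ] K) := by
      rw [LinearMap.mem_ker, ContinuousLinearMap.coe_coe, map_sub, hπ' z, sub_self]
    exact Submodule.mem_sup.2 ⟨z - π z, hz1, π z, ⟨z, rfl⟩, by abel⟩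
  -- pass to the quotient by the (closed) range of `T`
  haveI : IsClosed ((LinearMap.range (T : X₁ × X₂ →ₗ[ℝ] K) : Submodule ℝ K) : Set K) := hclosedT
  set q : K →L[ℝ] (K ⧸ LinearMap.range (T : X₁ × X₂ →ₗ[ℝ] K)) :=
    LinearMap.mkContinuous (LinearMap.range (T : X₁ × X₂ →ₗ[ℝ] K)).mkQ 1
      (fun z => by simpa using Submodule.Quotient.norm_mk_le _ z) with hq
  set v : X₁ × X₂ →L[ℝ] (K ⧸ LinearMap.range (T : X₁ × X₂ →ₗ[ℝ] K)) := q.comp S with hv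
  have hvc : IsCompactOperator ⇑v := by
    have hfun : ⇑v = fun z => -(q (Cop z)) := by
      funext z
      have h0 : q (T z) = 0 :=
        (Submodule.Quotient.mk_eq_zero _).2 ⟨z, rfl⟩
      have h1 : v z = q (T z) - q (Cop z) := by
        rw [hv]
        simp only [ContinuousLinearMap.comp_apply]
        rw [← map_sub]
        congr 1
        rw [hTSC z]; abel
      rw [h1, h0, zero_sub]
    rw [hfun]
    exact (hCopc.continuous_comp q.continuous).neg
  set WQ : Submodule ℝ (K ⧸ LinearMap.range (T : X₁ × X₂ →ₗ[ℝ] K)) := W.map (q : K →ₗ[ℝ] K ⧸ LinearMap.range (T : X₁ × X₂ →ₗ[ℝ] K))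
    with hWQ
  haveI hWQfd : FiniteDimensional ℝ WQ :=
    Module.Finite.map W (q : K →ₗ[ℝ] K ⧸ LinearMap.range (T : X₁ × X₂ →ₗ[ℝ] K))
  haveI : IsClosed ((WQ : Submodule ℝ (K ⧸ LinearMap.range (T : X₁ × X₂ →ₗ[ℝ] K))) : Set (K ⧸ LinearMap.range (T : X₁ × X₂ →ₗ[ℝ] K))) :=
    Submodule.closed_of_finiteDimensional WQ
  set p2 : (K ⧸ LinearMap.range (T : X₁ × X₂ →ₗ[ℝ] K)) →L[ℝ] ((K ⧸ LinearMap.range (T : X₁ × X₂ →ₗ[ℝ] K)) ⧸ WQ) :=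
    LinearMap.mkContinuous WQ.mkQ 1
      (fun z => by simpa using Submodule.Quotient.norm_mk_le _ z) with hp2
  set w : X₁ × X₂ →L[ℝ] ((K ⧸ LinearMap.range (T : X₁ × X₂ →ₗ[ℝ] K)) ⧸ WQ) := p2.comp v with hwdef
  have hwc : IsCompactOperator ⇑w := hvc.continuous_comp p2.continuous
  have hwsurj : Function.Surjective ⇑w := by
    intro ξ
    obtain ⟨η, hη⟩ := Submodule.Quotient.mk_surjective WQ ξ
    obtain ⟨z, hz⟩ := Submodule.Quotient.mk_surjective (LinearMap.range (T : X₁ × X₂ →ₗ[ℝ] K)) η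
    have hzmem : z ∈ LinearMap.range (S : X₁ × X₂ →ₗ[ℝ] K) ⊔ W := by rw [hsupW]; trivial
    obtain ⟨s, hs, w', hw', hsw⟩ := Submodule.mem_sup.1 hzmem
    obtain ⟨z₀, hz₀⟩ := hs
    refine ⟨z₀, ?_⟩
    have h1 : w z₀ = p2 (q (S z₀)) := rfl
    have hqs : q s = q z - q w' := by
      rw [← map_sub]
      congr 1
      rw [← hsw]; abel
    have hqw' : p2 (q w') = 0 :=
      (Submodule.Quotient.mk_eq_zero _).2 ⟨w', hw', rfl⟩
    have hqz : q z = η := hz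
    rw [h1, show S z₀ = s from hz₀, hqs, map_sub, hqw', sub_zero, hqz]
    exact hη
  -- open mapping + compactness : the second quotient is finite-dimensional
  obtain ⟨K₀, hK₀c, hK₀⟩ := IsCompactOperator.image_ball_subset_compact
    (f := (w : X₁ × X₂ →ₗ[ℝ] (K ⧸ LinearMap.range (T : X₁ × X₂ →ₗ[ℝ] K)) ⧸ WQ)) hwc 1
  have hopen : IsOpen (⇑w '' Metric.ball 0 1) :=
    (w.isOpenMap hwsurj) _ Metric.isOpen_ball
  have h0mem : (0 : (K ⧸ LinearMap.range (T : X₁ × X₂ →ₗ[ℝ] K)) ⧸ WQ) ∈ ⇑w '' Metric.ball 0 1 :=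
    ⟨0, Metric.mem_ball_self one_pos, map_zero w⟩
  obtain ⟨ε, hε, hball⟩ := Metric.isOpen_iff.1 hopen 0 h0mem
  have hsub : Metric.closedBall (0 : (K ⧸ LinearMap.range (T : X₁ × X₂ →ₗ[ℝ] K)) ⧸ WQ) (ε/2) ⊆ K₀ := by
    intro ζ hζ
    apply hK₀
    apply hball
    rw [Metric.mem_ball]
    rw [Metric.mem_closedBall] at hζ
    linarith
  have hcompact : IsCompact (Metric.closedBall (0 : (K ⧸ LinearMap.range (T : X₁ × X₂ →ₗ[ℝ] K)) ⧸ WQ) (ε/2)) :=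
    hK₀c.of_isClosed_subset Metric.isClosed_closedBall hsub
  haveI hQ2fd : FiniteDimensional ℝ ((K ⧸ LinearMap.range (T : X₁ × X₂ →ₗ[ℝ] K)) ⧸ WQ) :=
    FiniteDimensional.of_isCompact_closedBall₀ (𝕜 := ℝ) (by linarith) hcompact
  -- conclude
  have hrank := Submodule.rank_quotient_add_rank WQ
  have h1 : Module.rank ℝ ((K ⧸ LinearMap.range (T : X₁ × X₂ →ₗ[ℝ] K)) ⧸ WQ) < Cardinal.aleph0 :=
    Module.rank_lt_aleph0_iff.2 hQ2fd
  have h2 : Module.rank ℝ WQ < Cardinal.aleph0 := Module.rank_lt_aleph0_iff.2 hWQfd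
  have h3 : Module.rank ℝ (K ⧸ LinearMap.range (T : X₁ × X₂ →ₗ[ℝ] K)) < Cardinal.aleph0 := by
    rw [← hrank]
    exact Cardinal.add_lt_aleph0 h1 h2
  exact Module.rank_lt_aleph0_iff.1 h3
end

section
/- Let X be a real Banach space, let C > 0, and let S : X → X be a map with S(0) = 0 satisfying the quadratic estimate ‖S(v₂) − S(v₁)‖ ≤ C (‖v₁‖ + ‖v₂‖) ‖v₂ − v₁‖ for all v₁, v₂ ∈ X. Then for every e ∈ X with ‖e‖ ≤ 1/(16 C) there exists a unique V ∈ X with ‖V‖ ≤ 1/(8 C) satisfying V = S(V) − e, and this solution obeys ‖V‖ ≤ (4/3) ‖e‖. -/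
/-- Fixed point for maps with quadratic leading term: if
`‖S v₂ − S v₁‖ ≤ C (‖v₁‖ + ‖v₂‖) ‖v₂ − v₁‖` and `S 0 = 0`, then for every `e` with
`‖e‖ ≤ 1/(16 C)` the equation `V = S V − e` has a unique solution with
`‖V‖ ≤ 1/(8 C)`, and it satisfies `‖V‖ ≤ (4/3) ‖e‖`. -/
theorem quadratic_contraction_fixed_point
    {X : Type*} [NormedAddCommGroup X] [NormedSpace ℝ X] [CompleteSpace X]
    (C : ℝ) (hC : 0 < C)
    (S : X → X) (hS0 : S 0 = 0)
    (hS : ∀ v₁ v₂ : X, ‖S v₂ - S v₁‖ ≤ C * (‖v₁‖ + ‖v₂‖) * ‖v₂ - v₁‖)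
    (e : X) (he : ‖e‖ ≤ 1 / (16 * C)) :
    ∃ V : X, (‖V‖ ≤ 1 / (8 * C) ∧ V = S V - e) ∧
      ‖V‖ ≤ (4 / 3) * ‖e‖ ∧
      ∀ W : X, ‖W‖ ≤ 1 / (8 * C) → W = S W - e → W = V := by
  set r : ℝ := 1 / (8 * C) with hr
  have hrpos : 0 < r := by positivity
  have hCr : C * r = 1 / 8 := by rw [hr]; field_simp
  have hSnorm : ∀ v : X, ‖S v‖ ≤ C * ‖v‖ * ‖v‖ := by
    intro v
    have := hS 0 v
    simpa [hS0] using this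
  have hcoef : ∀ v w : X, ‖v‖ ≤ r → ‖w‖ ≤ r → C * (‖v‖ + ‖w‖) ≤ 1 / 4 := by
    intro v w hv hw
    have h1 : C * ‖v‖ ≤ C * r := mul_le_mul_of_nonneg_left hv hC.le
    have h2 : C * ‖w‖ ≤ C * r := mul_le_mul_of_nonneg_left hw hC.le
    nlinarith
  have he' : ‖e‖ ≤ r / 2 := by
    have : (1 : ℝ) / (16 * C) = r / 2 := by rw [hr]; field_simp; ring
    linarith [this ▸ he]
  have hmap : ∀ v : X, v ∈ Metric.closedBall (0 : X) r →
      S v - e ∈ Metric.closedBall (0 : X) r := by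
    intro v hv
    rw [Metric.mem_closedBall, dist_zero_right] at hv ⊢
    have h1 := hSnorm v
    have h2 : ‖S v - e‖ ≤ ‖S v‖ + ‖e‖ := norm_sub_le _ _
    have h3 : C * ‖v‖ * ‖v‖ ≤ C * r * r := by
      have hv0 := norm_nonneg v
      nlinarith [mul_le_mul_of_nonneg_left hv hC.le, mul_nonneg hC.le hv0,
        mul_le_mul_of_nonneg_right (mul_le_mul_of_nonneg_left hv hC.le) hrpos.le,
        mul_le_mul_of_nonneg_right (mul_le_mul_of_nonneg_left hv hC.le) hv0]
    have h4 : C * r * r = r / 8 := by rw [hCr]; ring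
    linarith
  haveI : Nonempty (Metric.closedBall (0 : X) r) :=
    ⟨⟨0, Metric.mem_closedBall_self hrpos.le⟩⟩
  have hclosed : IsClosed (Metric.closedBall (0 : X) r) := Metric.isClosed_closedBall
  haveI : CompleteSpace (Metric.closedBall (0 : X) r) := hclosed.completeSpace_coe
  set T : Metric.closedBall (0 : X) r → Metric.closedBall (0 : X) r :=
    fun v => ⟨S v.1 - e, hmap v.1 v.2⟩ with hT
  have hdist : ∀ x y : Metric.closedBall (0 : X) r,
      dist (T x) (T y) ≤ (1/4 : ℝ) * dist x y := by
    intro x y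
    have hx := x.2
    have hy := y.2
    rw [Metric.mem_closedBall, dist_zero_right] at hx hy
    have hd : dist (T x) (T y) = ‖S x.1 - S y.1‖ := by
      rw [Subtype.dist_eq]
      simp only [hT, dist_eq_norm, sub_sub_sub_cancel_right]
    rw [hd, Subtype.dist_eq, dist_eq_norm]
    calc ‖S x.1 - S y.1‖ ≤ C * (‖y.1‖ + ‖x.1‖) * ‖x.1 - y.1‖ := hS y.1 x.1
      _ ≤ (1/4 : ℝ) * ‖x.1 - y.1‖ :=
          mul_le_mul_of_nonneg_right (hcoef y.1 x.1 hy hx) (norm_nonneg _)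
  have hcontr : ContractingWith (1/4 : NNReal) T := by
    constructor
    · rw [← NNReal.coe_lt_coe]; norm_num
    · apply LipschitzWith.of_dist_le_mul
      intro x y
      have := hdist x y
      calc dist (T x) (T y) ≤ (1/4 : ℝ) * dist x y := this
        _ = ((1/4 : NNReal) : ℝ) * dist x y := by norm_num
  have hfix : T (ContractingWith.fixedPoint T hcontr) = ContractingWith.fixedPoint T hcontr :=
    hcontr.fixedPoint_isFixedPt
  set V : X := (ContractingWith.fixedPoint T hcontr).1 with hVdef
  have hVmem : ‖V‖ ≤ r := by
    have := (ContractingWith.fixedPoint T hcontr).2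
    rwa [Metric.mem_closedBall, dist_zero_right] at this
  have hVeq : V = S V - e := by
    have := congrArg Subtype.val hfix
    simp only [hT] at this
    exact this.symm
  have hVsmall : ‖V‖ ≤ (4/3) * ‖e‖ := by
    have h1 : ‖V‖ ≤ ‖S V‖ + ‖e‖ := by
      calc ‖V‖ = ‖S V - e‖ := by rw [← hVeq]
        _ ≤ ‖S V‖ + ‖e‖ := norm_sub_le _ _
    have h2 := hSnorm V
    have h3 := norm_nonneg V
    have h4 : C * ‖V‖ ≤ 1 / 8 := by
      rw [← hCr]; exact mul_le_mul_of_nonneg_left hVmem hC.le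
    nlinarith [mul_le_mul_of_nonneg_right h4 h3]
  refine ⟨V, ⟨hVmem, hVeq⟩, hVsmall, ?_⟩
  intro W hW hWeq
  have h1 : W - V = S W - S V := by
    nth_rewrite 1 [hWeq]
    nth_rewrite 1 [hVeq]
    abel
  have key : ‖W - V‖ ≤ (1/4 : ℝ) * ‖W - V‖ := by
    calc ‖W - V‖ = ‖S W - S V‖ := by rw [h1]
      _ ≤ C * (‖V‖ + ‖W‖) * ‖W - V‖ := hS V W
      _ ≤ (1/4 : ℝ) * ‖W - V‖ :=
          mul_le_mul_of_nonneg_right (hcoef V W hVmem hW) (norm_nonneg _)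
  have h0 : ‖W - V‖ = 0 := by linarith [norm_nonneg (W - V)]
  exact sub_eq_zero.mp (norm_eq_zero.mp h0)
end
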